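/- arXiv:1102.3253 — 6 statements merged into one kernel-verified Lean document; each statement's English description precedes it below -/
import Mathlib

section
/- A function f : X → Y between metric spaces is closed (i.e., maps closed sets to closed sets) if and only if for every convergent sequence y_i → y in Y with y_i ∈ f(X), y_i pairwise distinct, and every choice of points x_i ∈ f⁻¹(y_i), the sequence (x_i) has a cluster point in f⁻¹(y). -/
open Topology Filter Set

/-- From a point in the closure of `S` but not in `S`, extract an injective sequence in `S`
converging to it. -/
lemma exists_injective_seq_tendsto {Y : Type*} [MetricSpace Y] {S : Set Y} {y : Y}
    (hy : y ∈ closure S) (hyS : y ∉ S) :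
    ∃ g : ℕ → Y, (∀ n, g n ∈ S) ∧ Function.Injective g ∧ Tendsto g atTop (𝓝 y) := by
  have H : ∀ r : ℝ, ∃ z, 0 < r → z ∈ S ∧ dist z y < r := by
    intro r
    by_cases hr : 0 < r
    · rcases Metric.mem_closure_iff.mp hy r hr with ⟨z, hz, hd⟩
      exact ⟨z, fun _ => ⟨hz, by rwa [dist_comm] at hd⟩⟩
    · exact ⟨y, fun h => absurd h hr⟩
  choose c hc using H
  let g : ℕ → Y := fun n => Nat.rec (c 1) (fun n gn => c (min (1/((n : ℝ)+2)) (dist gn y))) n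
  have hg0 : g 0 = c 1 := rfl
  have hgs : ∀ n, g (n+1) = c (min (1/((n : ℝ)+2)) (dist (g n) y)) := fun n => rfl
  have key : ∀ n, g n ∈ S ∧ dist (g n) y < 1/((n : ℝ)+1) := by
    intro n; induction n with
    | zero =>
      have := hc 1 one_pos
      simpa [hg0] using this
    | succ n ih =>
      have hpos : 0 < dist (g n) y := dist_pos.mpr (fun h => hyS (h ▸ ih.1))
      have hrpos : 0 < min (1/((n : ℝ)+2)) (dist (g n) y) := lt_min (by positivity) hpos
      have h2 := hc _ hrpos
      rw [← hgs n] at h2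
      refine ⟨h2.1, lt_of_lt_of_le h2.2 ?_⟩
      have : (1:ℝ)/((n : ℝ)+2) = 1/(((n+1 : ℕ) : ℝ)+1) := by push_cast; ring
      rw [← this]
      exact min_le_left _ _
  have hdec : StrictAnti (fun n => dist (g n) y) := by
    apply strictAnti_nat_of_succ_lt
    intro n
    have hpos : 0 < dist (g n) y := dist_pos.mpr (fun h => hyS (h ▸ (key n).1))
    have hrpos : 0 < min (1/((n : ℝ)+2)) (dist (g n) y) := lt_min (by positivity) hpos
    have h2 := hc _ hrpos
    rw [← hgs n] at h2
    exact lt_of_lt_of_le h2.2 (min_le_right _ _)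
  refine ⟨g, fun n => (key n).1, ?_, ?_⟩
  · intro a b hab
    exact hdec.injective (by simp [hab])
  · rw [tendsto_iff_dist_tendsto_zero]
    exact squeeze_zero (fun n => dist_nonneg) (fun n => (key n).2.le)
      tendsto_one_div_add_atTop_nhds_zero_nat

/-- A function `f : X → Y` between metric spaces is closed (maps closed sets to closed
sets) iff for every convergent sequence `y i → y` in `Y` with pairwise distinct terms
(all in the image of `f`, which is automatic since `f` is surjective), every choice of
points `x i ∈ f⁻¹(y i)` has a cluster point belonging to `f⁻¹(y)`. -/
theorem closed_iff_cluster_point {X Y : Type*} [MetricSpace X] [MetricSpace Y]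
    (f : X → Y) (hf : Function.Surjective f) :
    IsClosedMap f ↔
      ∀ (y : Y) (yseq : ℕ → Y), Tendsto yseq atTop (𝓝 y) → Function.Injective yseq →
        ∀ x : ℕ → X, (∀ i, f (x i) = yseq i) →
          ∃ x₀, f x₀ = y ∧ MapClusterPt x₀ atTop x := by
  constructor
  · intro hclosed y yseq hy hinj x hx
    set S : Set ℕ := {i | yseq i ≠ y} with hS
    set A : Set X := x '' S with hA
    have hC : IsClosed (f '' closure A) := hclosed _ isClosed_closure
    have hyA : y ∈ closure (f '' A) := by
      rw [Metric.mem_closure_iff]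
      intro ε hε
      have hev : ∀ᶠ i in atTop, dist (yseq i) y < ε := by
        have := hy (Metric.ball_mem_nhds y hε)
        filter_upwards [this] with i hi using Metric.mem_ball.mp hi
      rcases eventually_atTop.mp hev with ⟨N, hN⟩
      have : ∃ i ≥ N, yseq i ≠ y := by
        by_cases h1 : yseq N = y
        · refine ⟨N+1, Nat.le_succ N, fun h2 => ?_⟩
          have := hinj (h1.trans h2.symm)
          omega
        · exact ⟨N, le_refl _, h1⟩
      obtain ⟨i, hiN, hiy⟩ := this
      exact ⟨yseq i, ⟨x i, ⟨i, hiy, rfl⟩, hx i⟩, by rw [dist_comm]; exact hN i hiN⟩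
    have hyfC : y ∈ f '' closure A := by
      have hsub : closure (f '' A) ⊆ f '' closure A :=
        closure_minimal (image_mono (f := f) subset_closure) hC
      exact hsub hyA
    obtain ⟨c, hcC, hcy⟩ := hyfC
    have hcA : c ∉ A := by
      rintro ⟨i, hi, rfl⟩
      exact hi ((hx i).symm.trans hcy)
    refine ⟨c, hcy, ?_⟩
    rw [mapClusterPt_iff_frequently]
    intro s hs
    rcases Metric.mem_nhds_iff.mp hs with ⟨ε, hε, hball⟩
    rw [frequently_atTop]
    intro N
    have hT : (x '' (S ∩ Set.Iio N)).Finite :=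
      ((Set.finite_Iio N).inter_of_right S).image x
    have hTc : c ∈ (x '' (S ∩ Set.Iio N))ᶜ := by
      rintro ⟨i, hi, h⟩
      exact hcA ⟨i, hi.1, h⟩
    obtain ⟨r, hr, hrT⟩ := Metric.isOpen_iff.mp hT.isClosed.isOpen_compl c hTc
    obtain ⟨a, haA, had⟩ := Metric.mem_closure_iff.mp hcC (min r ε) (lt_min hr hε)
    obtain ⟨i, hiS, rfl⟩ := haA
    have hxi_ball : x i ∈ Metric.ball c r := by
      rw [Metric.mem_ball, dist_comm]
      exact had.trans_le (min_le_left _ _)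
    have hnotT := hrT hxi_ball
    have hiN : N ≤ i := by
      by_contra h
      exact hnotT ⟨i, ⟨hiS, not_le.mp h⟩, rfl⟩
    refine ⟨i, hiN, hball ?_⟩
    rw [Metric.mem_ball, dist_comm]
    exact had.trans_le (min_le_right _ _)
  · intro H A hA
    apply isClosed_of_closure_subset
    intro y hy
    by_cases hyA : y ∈ f '' A
    · exact hyA
    · obtain ⟨g, hgS, hginj, hgt⟩ := exists_injective_seq_tendsto hy hyA
      choose x hxA hxf using hgS
      obtain ⟨x₀, hx₀y, hx₀c⟩ := H y g hgt hginj x hxf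
      refine ⟨x₀, ?_, hx₀y⟩
      have hmap : Filter.map x atTop ≤ 𝓟 A := by
        rw [Filter.le_principal_iff]
        exact Filter.mem_map.mpr (Filter.Eventually.of_forall hxA)
      have hx0 : x₀ ∈ closure A := by
        rw [mem_closure_iff_clusterPt]
        have hc : ClusterPt x₀ (Filter.map x atTop) := hx₀c
        exact hc.mono hmap
      rwa [hA.closure_eq] at hx0
end

section
/- A surjective function f : X → Y between metric spaces is open (maps open sets to open sets) if and only if for every sequence y_i → y in Y with pairwise distinct terms, every point x ∈ f⁻¹(y), and every open ball O(x) centered at x, there are only finitely many indices i with f⁻¹(y_i) ∩ O(x) = ∅. -/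
open Topology Filter Set

/-- A surjective function `f : X → Y` between metric spaces is open (maps open sets to
open sets) iff for every sequence `y i → y` in `Y` with pairwise distinct terms, every
point `x ∈ f⁻¹(y)` and every open ball around `x`, there are only finitely many indices
`i` with `f⁻¹(y i) ∩ O(x) = ∅`. -/
theorem open_iff_finitely_many_missed_balls {X Y : Type*} [MetricSpace X] [MetricSpace Y]
    (f : X → Y) (hf : Function.Surjective f) :
    IsOpenMap f ↔
      ∀ (y : Y) (yseq : ℕ → Y), Tendsto yseq atTop (𝓝 y) → Function.Injective yseq →
        ∀ x : X, f x = y → ∀ ε > (0 : ℝ),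
          {i : ℕ | f ⁻¹' {yseq i} ∩ Metric.ball x ε = ∅}.Finite := by
  classical
  constructor
  · intro hopen y yseq hlim _hinj x hfx ε hε
    have hball : IsOpen (f '' Metric.ball x ε) := hopen _ Metric.isOpen_ball
    have hmem : y ∈ f '' Metric.ball x ε := ⟨x, Metric.mem_ball_self hε, hfx⟩
    have hev : ∀ᶠ n in atTop, yseq n ∈ f '' Metric.ball x ε :=
      hlim (hball.mem_nhds hmem)
    obtain ⟨N, hN⟩ := eventually_atTop.1 hev
    apply Set.Finite.subset (Set.finite_Iio N)
    intro i hi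
    by_contra h
    have hNi : N ≤ i := le_of_not_gt h
    obtain ⟨z, hz, hzf⟩ := hN i hNi
    have hmem2 : z ∈ f ⁻¹' {yseq i} ∩ Metric.ball x ε := ⟨hzf, hz⟩
    rw [show f ⁻¹' {yseq i} ∩ Metric.ball x ε = ∅ from hi] at hmem2
    exact hmem2
  · intro H U hU
    rw [Metric.isOpen_iff]
    rintro y ⟨x, hxU, rfl⟩
    obtain ⟨ε, hε, hball⟩ := Metric.isOpen_iff.1 hU x hxU
    by_contra hcon
    push_neg at hcon
    set I := f '' Metric.ball x ε with hI
    have hfx_mem : f x ∈ I := ⟨x, Metric.mem_ball_self hε, rfl⟩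
    have key : ∀ r : ℝ, 0 < r → ∃ z : Y, dist z (f x) < r ∧ 0 < dist z (f x) ∧ z ∉ I := by
      intro r hr
      obtain ⟨z, hz1, hz2⟩ := not_subset.1 (hcon r hr)
      refine ⟨z, Metric.mem_ball.1 hz1, ?_, fun h => hz2 (Set.image_mono (f := f) hball h)⟩
      rw [dist_pos]
      rintro rfl
      exact hz2 (Set.image_mono (f := f) hball hfx_mem)
    let S := {z : Y // 0 < dist z (f x) ∧ z ∉ I}
    let pick : ∀ r : ℝ, 0 < r → S := fun r hr =>
      ⟨(key r hr).choose, (key r hr).choose_spec.2⟩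
    have pick_lt : ∀ (r : ℝ) (hr : 0 < r), dist (pick r hr).1 (f x) < r :=
      fun r hr => (key r hr).choose_spec.1
    let seq : ℕ → S := fun n => Nat.rec (pick 1 one_pos)
      (fun n z => pick (min (1 / (n + 2 : ℝ)) (dist z.1 (f x)))
        (lt_min (by positivity) z.2.1)) n
    have hstep : ∀ n : ℕ,
        dist (seq (n + 1)).1 (f x) < min (1 / (n + 2 : ℝ)) (dist (seq n).1 (f x)) :=
      fun n => pick_lt (min (1 / (n + 2 : ℝ)) (dist (seq n).1 (f x)))
        (lt_min (by positivity) (seq n).2.1)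
    have hanti : StrictAnti (fun n => dist (seq n).1 (f x)) := by
      apply strictAnti_nat_of_succ_lt
      intro n
      exact lt_of_lt_of_le (hstep n) (min_le_right _ _)
    have hsmall : ∀ n : ℕ, dist (seq (n + 1)).1 (f x) < 1 / (n + 2 : ℝ) :=
      fun n => lt_of_lt_of_le (hstep n) (min_le_left _ _)
    have hinj : Function.Injective fun n => (seq n).1 := by
      intro a b hab
      by_contra hne
      rcases lt_or_gt_of_ne hne with h | h
      · exact absurd (congrArg (fun z => dist z (f x)) hab) (ne_of_gt (hanti h))
      · exact absurd (congrArg (fun z => dist z (f x)) hab) (ne_of_lt (hanti h))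
    have htend : Tendsto (fun n => (seq n).1) atTop (𝓝 (f x)) := by
      rw [Metric.tendsto_atTop]
      intro δ hδ
      obtain ⟨N, hN⟩ := exists_nat_one_div_lt hδ
      refine ⟨N + 1, fun n hn => ?_⟩
      obtain ⟨m, rfl⟩ : ∃ m, n = m + 1 := ⟨n - 1, by omega⟩
      have hm : N ≤ m := by omega
      calc dist (seq (m + 1)).1 (f x) < 1 / (m + 2 : ℝ) := hsmall m
        _ ≤ 1 / (N + 1 : ℝ) := by
            apply one_div_le_one_div_of_le (by positivity)
            have : (N : ℝ) ≤ m := by exact_mod_cast hm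
            linarith
        _ < δ := hN
    have hfin := H (f x) (fun n => (seq n).1) htend hinj x rfl ε hε
    have huniv : {i : ℕ | f ⁻¹' {(seq i).1} ∩ Metric.ball x ε = ∅} = Set.univ := by
      ext i
      simp only [Set.mem_setOf_eq, Set.mem_univ, iff_true]
      ext z
      simp only [Set.mem_inter_iff, Set.mem_preimage, Set.mem_singleton_iff,
        Set.mem_empty_iff_false, iff_false, not_and]
      intro hfz hzball
      exact (seq i).2.2 ⟨z, hzball, hfz⟩
    rw [huniv] at hfin
    exact Set.infinite_univ hfin
end

section
/- Let f : X → Y be a clopen-LC function from a subset X of the Cantor set onto a subset Y of the Cantor set, with f⁻¹(y) compact for every y ∈ Y. Then Y can be covered by countably many subsets Y_0, Y_1, Y_2, … such that for every n ≥ 1 the restriction f : f⁻¹(Y_n) → Y_n is an open function, and the restriction f : f⁻¹(Y_0) → Y_0 is a closed function. -/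
open Topology Set

/-- **Theorem 1.** Let `f : X → Y` be a clopen-LC function between subsets of the
Cantor set `ℕ → Bool`, with compact preimages of points. Then `Y` can be covered by
countably many subsets `Y₀, Y₁, Y₂, …` such that the restriction of `f` to `f⁻¹(Yₙ)`
is an open function onto `Yₙ` for every `n ≥ 1`, and the restriction of `f` to
`f⁻¹(Y₀)` is a closed function onto `Y₀`. -/
theorem clopenLC_decomposition (X Y : Set (ℕ → Bool)) (f : X → Y)
    (hsurj : Function.Surjective f)
    (hLC : ∀ U : Set X, IsClopen U → IsLocallyClosed (f '' U))
    (hcomp : ∀ y : Y, IsCompact (f ⁻¹' {y})) :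
    ∃ Yn : ℕ → Set Y, (⋃ n, Yn n) = univ ∧
      (∀ n, 1 ≤ n → IsOpenMap (fun x : (f ⁻¹' Yn n : Set X) => (⟨f x.1, x.2⟩ : Yn n))) ∧
      IsClosedMap (fun x : (f ⁻¹' Yn 0 : Set X) => (⟨f x.1, x.2⟩ : Yn 0)) := by
  classical
  have : Countable (TopologicalSpace.Clopens (ℕ → Bool)) :=
    TopologicalSpace.Clopens.countable_iff_secondCountable.mpr inferInstance
  obtain ⟨V, hVsurj⟩ := exists_surjective_nat (TopologicalSpace.Clopens (ℕ → Bool))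
  set W : ℕ → Set X := fun n => (Subtype.val : X → ℕ → Bool) ⁻¹' (V n : Set (ℕ → Bool)) with hWdef
  have hW : ∀ n, IsClopen (W n) := fun n => (V n).isClopen.preimage continuous_subtype_val
  set A : ℕ → Set Y := fun n => f '' W n with hAdef
  set Y0 : Set Y := {y | ∀ n, y ∈ closure (A n) → y ∈ A n} with hY0def
  -- traces of Cantor clopens form a basis of X
  have H1 : ∀ (U : Set X) (x : X), IsOpen U → x ∈ U → ∃ n, x ∈ W n ∧ W n ⊆ U := by
    intro U x hU hx
    obtain ⟨O, hO, rfl⟩ := isOpen_induced_iff.mp hU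
    obtain ⟨K, hK, hxK, hKO⟩ := compact_exists_isClopen_in_isOpen hO hx
    obtain ⟨n, hn⟩ := hVsurj ⟨K, hK⟩
    refine ⟨n, ?_, ?_⟩
    · show (x : ℕ → Bool) ∈ (V n : Set (ℕ → Bool)); rw [hn]; exact hxK
    · intro a ha
      have : (a : ℕ → Bool) ∈ (V n : Set (ℕ → Bool)) := ha
      rw [hn] at this
      exact hKO this
  -- key closedness fact
  have H2 : ∀ (C : Set X), IsClosed C → ∀ y : Y, y ∈ Y0 → y ∈ closure (f '' C) → y ∈ f '' C := by
    intro C hC y hy0 hycl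
    by_contra hy
    set F : Set X := f ⁻¹' {y} with hFdef
    have hFC : ∀ x : X, x ∈ F → x ∈ Cᶜ := by
      intro x hxF hxC
      exact hy ⟨x, hxC, hxF⟩
    choose nn hn1 hn2 using fun x : F => H1 Cᶜ x.1 hC.isOpen_compl (hFC x.1 x.2)
    obtain ⟨t, ht⟩ := (hcomp y).elim_finite_subcover (fun x : F => W (nn x))
      (fun x => (hW (nn x)).2) (fun a ha => mem_iUnion.mpr ⟨⟨a, ha⟩, hn1 ⟨a, ha⟩⟩)
    set K : Set (ℕ → Bool) := ⋃ x ∈ t, (V (nn x) : Set (ℕ → Bool)) with hKdef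
    have hK : IsClopen K := isClopen_biUnion_finset fun x _ => (V (nn x)).isClopen
    obtain ⟨m, hm⟩ := hVsurj ⟨Kᶜ, hK.compl⟩
    have hCm : C ⊆ W m := by
      intro x hxC
      show (x : ℕ → Bool) ∈ (V m : Set (ℕ → Bool))
      rw [hm]
      intro hxK
      obtain ⟨i, hi⟩ := mem_iUnion.mp hxK
      obtain ⟨hit, hxi⟩ := mem_iUnion.mp hi
      exact hn2 i hxi hxC
    have hyA : y ∈ A m := hy0 m (closure_mono (image_mono (f := f) hCm) hycl)
    obtain ⟨x, hxm, hfx⟩ := hyA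
    have hxF : x ∈ F := by simpa [hFdef] using hfx
    have hxK : (x : ℕ → Bool) ∈ K := by
      obtain ⟨i, hi⟩ := mem_iUnion.mp (ht hxF)
      obtain ⟨hit, hxi⟩ := mem_iUnion.mp hi
      exact mem_iUnion.mpr ⟨i, mem_iUnion.mpr ⟨hit, hxi⟩⟩
    have : (x : ℕ → Bool) ∈ (V m : Set (ℕ → Bool)) := hxm
    rw [hm] at this
    exact this hxK
  -- key openness fact
  have H3 : ∀ (m : ℕ) (U : Set X), IsOpen U → ∀ y : Y, y ∈ closure (A m) \ A m →
      y ∈ f '' (U ∩ f ⁻¹' (closure (A m) \ A m)) →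
      ∃ G : Set Y, IsOpen G ∧ y ∈ G ∧
        G ∩ (closure (A m) \ A m) ⊆ f '' (U ∩ f ⁻¹' (closure (A m) \ A m)) := by
    intro m U hU y hyD hyim
    obtain ⟨x, ⟨hxU, hxD⟩, hfx⟩ := hyim
    obtain ⟨n, hxn, hnU⟩ := H1 U x hU hxU
    obtain ⟨k, hk⟩ := hVsurj ⟨(V n : Set (ℕ → Bool)) ∪ (V m : Set (ℕ → Bool)),
      (V n).isClopen.union (V m).isClopen⟩
    have hWk : W k = W n ∪ W m := by
      show Subtype.val ⁻¹' (V k : Set (ℕ → Bool)) = _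
      rw [hk]; rfl
    obtain ⟨G, Z, hG, hZ, hEq⟩ := hLC (W k) (hW k)
    have hAk : A k = f '' W n ∪ A m := by
      show f '' W k = _
      rw [hWk, image_union]
    have hyAk : y ∈ f '' W k := by
      rw [hWk]; exact ⟨x, Or.inl hxn, hfx⟩
    have hyG : y ∈ G := by
      have := hyAk
      rw [show f '' W k = G ∩ Z from hEq] at this
      exact this.1
    refine ⟨G, hG, hyG, ?_⟩
    rintro z ⟨hzG, hzD⟩
    have hzZ : z ∈ Z := by
      have h1 : A m ⊆ f '' W k := by rw [hWk, image_union]; exact subset_union_right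
      have h2 : f '' W k ⊆ Z := by rw [hEq]; exact inter_subset_right
      exact closure_minimal (h1.trans h2) hZ hzD.1
    have hzAk : z ∈ f '' W k := by
      rw [show f '' W k = G ∩ Z from hEq]; exact ⟨hzG, hzZ⟩
    rw [hWk, image_union] at hzAk
    rcases hzAk with hzn | hzm
    · obtain ⟨x', hx'n, hfx'⟩ := hzn
      exact ⟨x', ⟨hnU hx'n, by rw [mem_preimage, hfx']; exact hzD⟩, hfx'⟩
    · exact absurd hzm hzD.2
  refine ⟨fun n => Nat.casesOn n Y0 (fun m => closure (A m) \ A m), ?_, ?_, ?_⟩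
  · ext y
    simp only [mem_iUnion, mem_univ, iff_true]
    by_cases h : ∀ n, y ∈ closure (A n) → y ∈ A n
    · exact ⟨0, h⟩
    · push_neg at h
      obtain ⟨m, hm1, hm2⟩ := h
      exact ⟨m + 1, hm1, hm2⟩
  · rintro (_ | m) hn
    · omega
    · intro U' hU'
      obtain ⟨U, hU, rfl⟩ := isOpen_induced_iff.mp hU'
      rw [isOpen_iff_forall_mem_open]
      rintro ⟨y, hyD⟩ ⟨x, hxU, hgx⟩
      have hfx : f x.1 = y := congrArg Subtype.val hgx
      have hyim : y ∈ f '' (U ∩ f ⁻¹' (closure (A m) \ A m)) := ⟨x.1, ⟨hxU, x.2⟩, hfx⟩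
      obtain ⟨G, hG, hyG, hGsub⟩ := H3 m U hU y hyD hyim
      refine ⟨Subtype.val ⁻¹' G, ?_, hG.preimage continuous_subtype_val, hyG⟩
      rintro ⟨z, hzD⟩ hzG
      obtain ⟨x', ⟨hx'U, hx'D⟩, hfx'⟩ := hGsub ⟨hzG, hzD⟩
      exact ⟨⟨x', hx'D⟩, hx'U, Subtype.ext hfx'⟩
  · intro C' hC'
    obtain ⟨C, hC, rfl⟩ := isClosed_induced_iff.mp hC'
    have himg : (fun x : (f ⁻¹' Y0 : Set X) => (⟨f x.1, x.2⟩ : Y0)) '' (Subtype.val ⁻¹' C)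
        = Subtype.val ⁻¹' (closure (f '' C)) := by
      ext ⟨y, hy⟩
      constructor
      · rintro ⟨x, hxC, hgx⟩
        have hfx : f x.1 = y := congrArg Subtype.val hgx
        exact subset_closure ⟨x.1, hxC, hfx⟩
      · intro hycl
        obtain ⟨x, hxC, hfx⟩ := H2 C hC y hy hycl
        have hxY0 : x ∈ f ⁻¹' Y0 := by rw [mem_preimage, hfx]; exact hy
        exact ⟨⟨x, hxY0⟩, hxC, Subtype.ext hfx⟩
    have hcl : IsClosed (Subtype.val ⁻¹' (closure (f '' C)) : Set Y0) :=
      isClosed_closure.preimage continuous_subtype_val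
    rw [← himg] at hcl
    exact hcl
end

section
/- Let X be a subset of the Cantor set, f : X → Y ⊆ Cantor set a clopen-LC function with compact point-preimages. For n ≥ 1, define X_n as the union of all fibers f⁻¹(y) such that there exists a sequence y_k → y in Y, y_k ≠ y, and points x_k ∈ f⁻¹(y_k) converging to a point x̃ in the Cantor set with dist(x̃, f⁻¹(y)) > 1/n. Then the restriction of f to X_n is an open function onto f(X_n). -/
open Topology Filter Set

attribute [local instance] PiNat.metricSpace

/-- **Lemma 1.** Let `f : X → Y` be a clopen-LC function between subsets of the Cantor
set with compact preimages of points, and for `n ≥ 1` let `Xₙ` be the union of the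
fibers `f⁻¹(y)` for which there is a sequence `y k → y`, `y k ≠ y`, and points
`x k ∈ f⁻¹(y k)` converging (in the Cantor set) to a point `x̃` with
`dist(x̃, f⁻¹(y)) > 1/n`. Then the restriction of `f` to `Xₙ` is an open map onto
`f(Xₙ)`. -/
theorem restriction_to_Xn_isOpenMap (X Y : Set (ℕ → Bool)) (f : X → Y)
    (hLC : ∀ U : Set X, IsClopen U → IsLocallyClosed (f '' U))
    (hcomp : ∀ y : Y, IsCompact (f ⁻¹' {y}))
    (n : ℕ) (hn : 1 ≤ n)
    (Xn : Set X)
    (hXn : Xn = ⋃ y ∈ {y : Y | ∃ (yseq : ℕ → Y) (xseq : ℕ → X) (xt : ℕ → Bool),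
        Tendsto yseq atTop (𝓝 y) ∧ (∀ k, yseq k ≠ y) ∧ (∀ k, f (xseq k) = yseq k) ∧
        Tendsto (fun k => (xseq k : ℕ → Bool)) atTop (𝓝 xt) ∧
        Metric.infDist xt ((↑) '' (f ⁻¹' {y})) > 1 / (n : ℝ)},
      f ⁻¹' {y}) :
    IsOpenMap (fun x : Xn =>
      (⟨f x.1, Set.mem_image_of_mem f x.2⟩ : f '' Xn)) := by
  classical
  have hn0 : (0:ℝ) < 1 / (n:ℝ) := by
    have : (0:ℝ) < (n:ℝ) := by exact_mod_cast Nat.lt_of_lt_of_le Nat.zero_lt_one hn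
    positivity
  obtain ⟨m, hm⟩ : ∃ m : ℕ, (1/2 : ℝ) ^ m < 1 / (n:ℝ) :=
    exists_pow_lt_of_lt_one hn0 (by norm_num)
  -- cylinders are clopen
  have cylClopen : ∀ (u : ℕ → Bool) (k : ℕ), IsClopen (PiNat.cylinder u k) := by
    intro u k
    constructor
    · rw [PiNat.cylinder_eq_pi]
      exact isClosed_set_pi fun i _ => isClosed_singleton
    · exact PiNat.isOpen_cylinder (fun _ => Bool) u k
  set g : Xn → ↥(f '' Xn) :=
    (fun x : Xn => (⟨f x.1, Set.mem_image_of_mem f x.2⟩ : f '' Xn)) with hg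
  rw [isOpenMap_iff_nhds_le]
  intro a s hs
  rw [mem_map] at hs
  obtain ⟨ε, εpos, hball⟩ := Metric.mem_nhds_iff.1 hs
  obtain ⟨L, hL⟩ : ∃ L : ℕ, (1/2:ℝ)^L < ε := exists_pow_lt_of_lt_one εpos (by norm_num)
  set x : X := a.1 with hx
  set W : Set X := Subtype.val ⁻¹' PiNat.cylinder (x : ℕ → Bool) L with hWdef
  have hWclopen : IsClopen W := (cylClopen _ L).preimage continuous_subtype_val
  have hxW : x ∈ W := PiNat.self_mem_cylinder _ _
  -- membership in `W` puts a point of `Xn` into the ball around `a`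
  have hW : ∀ b : Xn, (b : X) ∈ W → g b ∈ s := by
    intro b hb
    apply hball
    have hd : dist ((b:X) : ℕ → Bool) ((x:X) : ℕ → Bool) ≤ (1/2:ℝ)^L :=
      PiNat.mem_cylinder_iff_dist_le.mp hb
    have : dist b a < ε := by
      rw [Subtype.dist_eq, Subtype.dist_eq]
      exact lt_of_le_of_lt hd hL
    exact this
  by_contra hns
  -- the image point is in the closure of the complement of `s`
  have h1 : g a ∈ closure sᶜ := by
    rw [mem_closure_iff_nhds]
    intro t ht
    by_contra h'
    apply hns
    refine mem_of_superset ht fun u hu => ?_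
    by_contra hus
    exact h' ⟨u, hu, hus⟩
  set Z : Set Y := Subtype.val '' (sᶜ : Set ↥(f '' Xn)) with hZdef
  have hyZ : (f x : Y) ∈ closure Z := by
    have := image_closure_subset_closure_image (f := (Subtype.val : ↥(f '' Xn) → Y))
      continuous_subtype_val (s := sᶜ)
    exact this ⟨g a, h1, rfl⟩
  -- the cylinder sets indexed by `Fin m → Bool`
  set ext : (Fin m → Bool) → (ℕ → Bool) := fun v i => if h : i < m then v ⟨i, h⟩ else false
    with hextdef
  set C : (Fin m → Bool) → Set X :=
    fun v => Subtype.val ⁻¹' PiNat.cylinder (ext v) m with hCdef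
  have hCclopen : ∀ v, IsClopen (C v) := fun v =>
    (cylClopen _ m).preimage continuous_subtype_val
  set S : (Fin m → Bool) → Set Y := fun v =>
    {z : Y | z ∉ f '' W ∧ z ∈ closure (f '' C v) ∧ z ∉ f '' C v} with hSdef
  -- main claim: every point of `Z` lies in some `S v`
  have hZS : Z ⊆ ⋃ v, S v := by
    rintro z ⟨b, hbs, rfl⟩
    obtain ⟨c, hcXn, hfc⟩ := b.2
    have hcb := hcXn
    rw [hXn] at hcb
    simp only [mem_iUnion, exists_prop] at hcb
    obtain ⟨y', hy', hcy'⟩ := hcb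
    have hbeq : ((b : Y)) = y' := by
      rw [← hfc]; exact hcy'
    subst hbeq
    obtain ⟨yseq, xseq, xt, hyt, hne, hfx, hxt, hdist⟩ := hy'
    -- fiber of `b` is contained in `Xn`
    have hfib : ∀ b' : X, f b' = (b : Y) → b' ∈ Xn := by
      intro b' hb'
      rw [hXn]
      exact mem_biUnion ⟨yseq, xseq, xt, hyt, hne, hfx, hxt, hdist⟩ hb'
    -- `b ∉ f '' W`
    have hzW : (b : Y) ∉ f '' W := by
      rintro ⟨b', hb'W, hb'⟩
      have hb'Xn : b' ∈ Xn := hfib b' hb'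
      have hgb : g ⟨b', hb'Xn⟩ ∈ s := hW ⟨b', hb'Xn⟩ hb'W
      have : g ⟨b', hb'Xn⟩ = b := by
        apply Subtype.ext
        exact hb'
      rw [this] at hgb
      exact hbs hgb
    set v : Fin m → Bool := fun i => xt i with hvdef
    have hextv : ∀ i < m, ext v i = xt i := by
      intro i hi
      simp [hextdef, hvdef, hi]
    have hcyl : PiNat.cylinder (ext v) m = PiNat.cylinder xt m := by
      ext u
      simp only [PiNat.mem_cylinder_iff]
      exact ⟨fun h i hi => (h i hi).trans (hextv i hi),
        fun h i hi => (h i hi).trans (hextv i hi).symm⟩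
    refine mem_iUnion.2 ⟨v, hzW, ?_, ?_⟩
    · -- closure membership
      have hev1 : ∀ᶠ k in atTop, dist ((xseq k : ℕ → Bool)) xt < (1/2:ℝ)^m := by
        have := Metric.tendsto_nhds.mp hxt
        exact this _ (by positivity)
      have hev : ∀ᶠ k in atTop, yseq k ∈ f '' C v := by
        refine hev1.mono fun k hk => ⟨xseq k, ?_, hfx k⟩
        show ((xseq k : X) : ℕ → Bool) ∈ PiNat.cylinder (ext v) m
        rw [hcyl]
        exact PiNat.mem_cylinder_iff.2 fun i hi =>
          PiNat.apply_eq_of_dist_lt hk hi.le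
      exact mem_closure_of_tendsto hyt hev
    · -- not in the image of the cylinder
      rintro ⟨b', hb'C, hb'⟩
      have hb'cyl : ((b' : X) : ℕ → Bool) ∈ PiNat.cylinder xt m := by
        rw [← hcyl]; exact hb'C
      have hd : dist ((b' : X) : ℕ → Bool) xt ≤ (1/2:ℝ)^m :=
        PiNat.mem_cylinder_iff_dist_le.mp hb'cyl
      have hmem : ((b' : X) : ℕ → Bool) ∈ (↑) '' (f ⁻¹' ({(b : Y)} : Set Y)) :=
        ⟨b', by simp [hb'], rfl⟩
      have : Metric.infDist xt ((↑) '' (f ⁻¹' ({(b : Y)} : Set Y))) ≤ (1/2:ℝ)^m := by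
        refine le_trans (Metric.infDist_le_dist_of_mem hmem) ?_
        rw [dist_comm]; exact hd
      linarith
  -- finish: pick `v0` with `f x ∈ closure (S v0)`
  have hyU : (f x : Y) ∈ ⋃ v, closure (S v) := by
    have hcl : IsClosed (⋃ v, closure (S v)) :=
      isClosed_iUnion_of_finite fun v => isClosed_closure
    have hsub : closure Z ⊆ ⋃ v, closure (S v) :=
      closure_minimal (hZS.trans (iUnion_mono fun v => subset_closure)) hcl
    exact hsub hyZ
  obtain ⟨v0, hyv0⟩ := mem_iUnion.1 hyU
  set E : Set X := W ∪ C v0 with hEdef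
  have hEclopen : IsClopen E := hWclopen.union (hCclopen v0)
  have hAE : IsClosed (closure (f '' E) \ f '' E) := by
    have h := (hLC E hEclopen).isOpen_coborder
    rw [coborder] at h
    exact isOpen_compl_iff.mp h
  have hSsub : S v0 ⊆ closure (f '' E) \ f '' E := by
    rintro z ⟨hz1, hz2, hz3⟩
    constructor
    · exact closure_mono (image_mono (f := f) subset_union_right) hz2
    · rw [hEdef, image_union]
      rintro (h | h)
      · exact hz1 h
      · exact hz3 h
  have hyAE : (f x : Y) ∈ closure (f '' E) \ f '' E :=
    (closure_minimal hSsub hAE) hyv0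
  exact hyAE.2 ⟨x, Or.inl hxW, rfl⟩
end

section
/- Let f : X → Y be a continuous, surjective, open-LC function between separable metric spaces with compact point-preimages. Then Y can be covered by countably many subsets Y_0, Y_1, Y_2, … such that the restriction of f to f⁻¹(Y_n) is an open function onto Y_n for each n ≥ 1, and the restriction of f to f⁻¹(Y_0) is a closed function onto Y_0. -/
open Topology Set TopologicalSpace Metric Filter

section Helpers

set_option linter.unusedSectionVars false

variable {X Y : Type*} [TopologicalSpace X] [TopologicalSpace Y]

lemma restr_image (f : X → Y) (Y' : Set Y) (s : Set X) :
    (fun x : (f ⁻¹' Y' : Set X) => (⟨f x.1, x.2⟩ : Y')) '' (Subtype.val ⁻¹' s)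
      = Subtype.val ⁻¹' (f '' (s ∩ f ⁻¹' Y')) := by
  ext ⟨y, hy⟩
  constructor
  · rintro ⟨⟨x, hx⟩, hxs, hxy⟩
    exact ⟨x, ⟨hxs, hx⟩, congrArg Subtype.val hxy⟩
  · rintro ⟨x, ⟨hxs, hx⟩, hxy⟩
    exact ⟨⟨x, hx⟩, hxs, Subtype.ext hxy⟩

lemma open_on_D (f : X → Y) (hLC : ∀ U : Set X, IsOpen U → IsLocallyClosed (f '' U))
    (W : Set X) (hW : IsOpen W) :
    IsOpenMap (fun x : (f ⁻¹' (closure (f '' W) \ f '' W) : Set X) =>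
      (⟨f x.1, x.2⟩ : (closure (f '' W) \ f '' W : Set Y))) := by
  set D : Set Y := closure (f '' W) \ f '' W with hD
  intro s hs
  obtain ⟨O, hO, rfl⟩ := isOpen_induced_iff.mp hs
  rw [restr_image]
  set A : Set Y := f '' (O ∩ f ⁻¹' D) with hA
  have key : ∀ y ∈ A, ∃ V : Set Y, IsOpen V ∧ y ∈ V ∧ V ∩ D ⊆ A := by
    intro y hy
    obtain ⟨U', Z, hU', hZ, hTZ⟩ := hLC (O ∪ W) (hO.union hW)
    refine ⟨U', hU', ?_, ?_⟩
    · have : y ∈ f '' (O ∪ W) := by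
        rcases hy with ⟨x, ⟨hxO, _⟩, rfl⟩
        exact ⟨x, Or.inl hxO, rfl⟩
      rw [hTZ] at this
      exact this.1
    · rintro z ⟨hzV, hzD⟩
      have hz1 : z ∈ closure (f '' W) := hzD.1
      have hz2 : z ∈ Z := by
        have hsub : f '' W ⊆ Z := by
          intro w hw
          have : w ∈ f '' (O ∪ W) := image_mono (f := f) subset_union_right hw
          rw [hTZ] at this; exact this.2
        exact hZ.closure_subset_iff.mpr hsub hz1
      have hzT : z ∈ f '' (O ∪ W) := by rw [hTZ]; exact ⟨hzV, hz2⟩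
      rcases hzT with ⟨x, hx | hx, rfl⟩
      · exact ⟨x, ⟨hx, hzD⟩, rfl⟩
      · exact absurd ⟨x, hx, rfl⟩ hzD.2
  choose V hVopen hVmem hVsub using key
  rw [isOpen_induced_iff]
  refine ⟨⋃ y, ⋃ h : y ∈ A, V y h, isOpen_iUnion fun y => isOpen_iUnion fun h => hVopen y h, ?_⟩
  ext ⟨z, hz⟩
  simp only [mem_preimage, mem_iUnion]
  constructor
  · rintro ⟨y, hy, hzV⟩
    exact hVsub y hy ⟨hzV, hz⟩
  · intro hzA
    exact ⟨z, hzA, hVmem z hzA⟩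


end Helpers

/-- **Corollary 1.** Let `f : X → Y` be a continuous surjective open-LC function
between separable metric spaces with compact preimages of points. Then `Y` can be
covered by countably many subsets `Y₀, Y₁, …` such that the restriction of `f` to
`f⁻¹(Yₙ)` is open onto `Yₙ` for each `n ≥ 1` and the restriction of `f` to `f⁻¹(Y₀)`
is closed onto `Y₀`. -/
theorem openLC_decomposition {X Y : Type*} [MetricSpace X] [SeparableSpace X]
    [MetricSpace Y] [SeparableSpace Y] (f : X → Y)
    (hcont : Continuous f) (hsurj : Function.Surjective f)
    (hLC : ∀ U : Set X, IsOpen U → IsLocallyClosed (f '' U))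
    (hcomp : ∀ y : Y, IsCompact (f ⁻¹' {y})) :
    ∃ Yn : ℕ → Set Y, (⋃ n, Yn n) = univ ∧
      (∀ n, 1 ≤ n → IsOpenMap (fun x : (f ⁻¹' Yn n : Set X) => (⟨f x.1, x.2⟩ : Yn n))) ∧
      IsClosedMap (fun x : (f ⁻¹' Yn 0 : Set X) => (⟨f x.1, x.2⟩ : Yn 0)) := by
  -- a countable base of X
  haveI : SecondCountableTopology X := UniformSpace.secondCountable_of_separable X
  obtain ⟨b, hbc, -, hb⟩ := exists_countable_basis X
  -- the family of finite unions of basis elements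
  set 𝒰 : Set (Set X) := sUnion '' {t : Set (Set X) | t.Finite ∧ t ⊆ b} with h𝒰
  have h𝒰c : 𝒰.Countable := (countable_setOf_finite_subset hbc).image _
  have h𝒰ne : 𝒰.Nonempty := ⟨⋃₀ (∅ : Set (Set X)), ⟨∅, ⟨finite_empty, empty_subset _⟩, rfl⟩⟩
  obtain ⟨e, he⟩ := h𝒰c.exists_eq_range h𝒰ne
  -- the key sets
  set Wn : ℕ → Set X := fun n => (closure (e n))ᶜ with hWn
  set S : ℕ → Set Y := fun n => f '' Wn n with hS
  set D : ℕ → Set Y := fun n => closure (S n) \ S n with hDdef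
  refine ⟨fun n => Nat.casesOn n (⋃ i, D i)ᶜ D, ?_, ?_, ?_⟩
  · -- covering
    ext y
    simp only [mem_iUnion, mem_univ, iff_true]
    by_cases hy : y ∈ ⋃ i, D i
    · obtain ⟨i, hi⟩ := mem_iUnion.mp hy
      exact ⟨i + 1, hi⟩
    · exact ⟨0, hy⟩
  · -- openness for n ≥ 1
    rintro (_ | n) hn
    · omega
    · exact open_on_D f hLC (Wn n) (isOpen_compl_iff.mpr isClosed_closure)
  · -- closedness on Y₀
    intro C hC
    obtain ⟨C', hC', rfl⟩ := isClosed_induced_iff.mp hC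
    rw [restr_image]
    set Y0 : Set Y := (⋃ i, D i)ᶜ with hY0
    set B : Set Y := f '' (C' ∩ f ⁻¹' Y0) with hB
    rw [isClosed_induced_iff]
    refine ⟨closure B, isClosed_closure, ?_⟩
    ext ⟨y, hy⟩
    simp only [mem_preimage]
    refine ⟨fun hyc => ?_, fun h => subset_closure h⟩
    -- main argument
    obtain ⟨yk, hykB, hyk⟩ := mem_closure_iff_seq_limit.mp hyc
    choose xk hxk hfxk using hykB
    have hxkC : ∀ k, xk k ∈ C' := fun k => (hxk k).1
    have hxkY0 : ∀ k, f (xk k) ∈ Y0 := fun k => (hxk k).2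
    set K : Set X := f ⁻¹' {y} with hK
    have hKcomp : IsCompact K := hcomp y
    have hKne : K.Nonempty := hsurj y
    have hfxk' : Tendsto (fun k => f (xk k)) atTop (𝓝 y) := by
      simpa only [hfxk] using hyk
    by_cases hcase : ∀ ε > (0 : ℝ), ∃ᶠ k in atTop, infDist (xk k) K < ε
    · -- Case 1: the sequence clusters at the fiber
      have hcl : ∃ z ∈ K, MapClusterPt z atTop xk := by
        by_contra hno
        push_neg at hno
        have hnb : ∀ z (hz : z ∈ K), ∃ V : Set X, IsOpen V ∧ z ∈ V ∧ ∀ᶠ k in atTop, xk k ∉ V := by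
          intro z hz
          have h := hno z hz
          rw [mapClusterPt_iff_frequently] at h
          push_neg at h
          obtain ⟨s, hs, hsev⟩ := h
          obtain ⟨V, hVs, hVo, hzV⟩ := _root_.mem_nhds_iff.mp hs
          exact ⟨V, hVo, hzV, hsev.mono fun k hk hmem => hk (hVs hmem)⟩
        choose V hVopen hVmem hVev using hnb
        obtain ⟨t, ht⟩ := hKcomp.elim_nhds_subcover' V
          (fun z hz => (hVopen z hz).mem_nhds (hVmem z hz))
        set O : Set X := ⋃ z ∈ t, V z.1 z.2 with hO
        have hOopen : IsOpen O :=
          isOpen_biUnion fun z _ => hVopen z.1 z.2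
        have hKO : K ⊆ O := ht
        have hOev : ∀ᶠ k in atTop, xk k ∉ O := by
          have h : ∀ᶠ k in atTop, ∀ z ∈ t, xk k ∉ V z.1 z.2 :=
            t.eventually_all.mpr fun z _ => hVev z.1 z.2
          filter_upwards [h] with k hk hmem
          obtain ⟨z, hz, hzk⟩ := mem_iUnion₂.mp hmem
          exact hk z hz hzk
        obtain ⟨δ, hδ, hth⟩ := hKcomp.exists_thickening_subset_open hOopen hKO
        obtain ⟨k, hk1, hk2⟩ := ((hcase δ hδ).and_eventually hOev).exists
        exact hk2 (hth ((mem_thickening_iff_infDist_lt hKne).mpr hk1))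
      obtain ⟨z, hzK, hzc⟩ := hcl
      have hzC' : z ∈ C' := by
        have h1 : ClusterPt z (map xk atTop) := hzc
        have h2 : map xk atTop ≤ 𝓟 C' :=
          le_principal_iff.mpr (mem_map.mpr (Eventually.of_forall hxkC))
        have h3 : ClusterPt z (𝓟 C') := h1.mono h2
        exact hC'.closure_eq ▸ mem_closure_iff_clusterPt.mpr h3
      have hfz : f z = y := hzK
      exact ⟨z, ⟨hzC', by rw [mem_preimage, hfz]; exact hy⟩, hfz⟩
    · -- Case 2: the sequence stays away from the fiber; contradiction with y ∈ Y0
      push_neg at hcase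
      obtain ⟨ε, hε, hev⟩ := hcase
      simp only [← not_lt] at hev
      have hev' : ∀ᶠ k in atTop, ε ≤ infDist (xk k) K := by
        filter_upwards [hev] with k hk; linarith [not_lt.mp hk]
      -- choose basis elements covering K inside small balls
      have hε3 : (0:ℝ) < ε / 3 := by linarith
      have hbas : ∀ z (hz : z ∈ K), ∃ Bz : Set X, Bz ∈ b ∧ z ∈ Bz ∧ Bz ⊆ ball z (ε / 3) := by
        intro z hz
        obtain ⟨Bz, hBz, hzB, hBsub⟩ := hb.exists_subset_of_mem_open
          (mem_ball_self hε3) isOpen_ball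
        exact ⟨Bz, hBz, hzB, hBsub⟩
      choose Bz hBzb hBzmem hBzsub using hbas
      obtain ⟨t, ht⟩ := hKcomp.elim_nhds_subcover' (fun z hz => Bz z hz)
        (fun z hz => (hb.isOpen (hBzb z hz)).mem_nhds (hBzmem z hz))
      set U' : Set X := ⋃ z ∈ t, Bz z.1 z.2 with hU'
      have hU'𝒰 : U' ∈ 𝒰 := by
        refine ⟨(fun z : K => Bz z.1 z.2) '' ↑t, ⟨t.finite_toSet.image _, ?_⟩, ?_⟩
        · rintro s ⟨z, hz, rfl⟩
          exact hBzb z.1 z.2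
        · rw [sUnion_image]
          simp only [Finset.mem_coe, hU']
      obtain ⟨n, hn⟩ : ∃ n, e n = U' := by
        rw [he] at hU'𝒰; exact hU'𝒰
      -- K avoids Wn n
      have hKW : K ∩ Wn n = ∅ := by
        rw [eq_empty_iff_forall_notMem]
        rintro x ⟨hxK, hxW⟩
        exact hxW (hn ▸ subset_closure (ht hxK))
      -- eventually the sequence is in Wn n
      have hxkW : ∀ᶠ k in atTop, xk k ∈ Wn n := by
        filter_upwards [hev'] with k hk
        simp only [hWn, mem_compl_iff, hn]
        intro hmem
        rw [hU', t.closure_biUnion] at hmem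
        obtain ⟨z, hz, hzk⟩ := mem_iUnion₂.mp hmem
        have h1 : xk k ∈ closedBall z.1 (ε / 3) :=
          closure_ball_subset_closedBall (closure_mono (hBzsub z.1 z.2) hzk)
        have h2 : infDist (xk k) K ≤ dist (xk k) z.1 := infDist_le_dist_of_mem z.2
        rw [mem_closedBall] at h1
        linarith
      -- conclude y ∈ D n
      have hycl : y ∈ closure (S n) :=
        mem_closure_of_frequently_of_tendsto
          ((hxkW.mono fun k hk => mem_image_of_mem f hk).frequently) hfxk'
      have hynot : y ∉ S n := by
        rintro ⟨x, hxW, hxy⟩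
        have hx : x ∈ K ∩ Wn n := ⟨hxy, hxW⟩
        rw [hKW] at hx
        exact hx
      have hyD : y ∈ D n := ⟨hycl, hynot⟩
      exact absurd (mem_iUnion.mpr ⟨n, hyD⟩) hy
end

section
/- Let f : X → Y be a bijection between separable metric spaces such that both f and f⁻¹ are open-LC functions. Then f is a countable homeomorphism: X can be partitioned into countably many pairwise disjoint sets X_i such that each restriction f|X_i : X_i → f(X_i) is a homeomorphism (with subspace topologies). -/
open Topology Set TopologicalSpace

section Helpers

variable {X Y : Type*}

/-- A positive lower bound for finitely many positive reals. -/
lemma exists_pos_lb {ι : Type*} {s : Set ι} (hs : s.Finite) (g : ι → ℝ)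
    (hg : ∀ i ∈ s, 0 < g i) : ∃ δ > 0, ∀ i ∈ s, δ ≤ g i := by
  rcases s.eq_empty_or_nonempty with rfl | ⟨i₀, hi₀⟩
  · exact ⟨1, one_pos, by simp⟩
  · set t := hs.toFinset.image g with ht
    have htne : t.Nonempty := ⟨g i₀, Finset.mem_image_of_mem g (hs.mem_toFinset.2 hi₀)⟩
    refine ⟨t.min' htne, ?_, fun i hi =>
      Finset.min'_le t _ (Finset.mem_image_of_mem g (hs.mem_toFinset.2 hi))⟩
    obtain ⟨j, hj, hje⟩ := Finset.mem_image.1 (t.min'_mem htne)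
    exact hje ▸ hg j (hs.mem_toFinset.1 hj)

/-- Local closedness via metric balls: near any point of `S`, closure points of `S` are in `S`. -/
lemma lc_ball [MetricSpace X] {S : Set X} (h : IsLocallyClosed S) {x : X} (hx : x ∈ S) :
    ∃ ε > 0, ∀ z, dist z x < ε → z ∈ closure S → z ∈ S := by
  obtain ⟨U, Z, hU, hZ, rfl⟩ := h
  obtain ⟨ε, hε, hball⟩ := Metric.isOpen_iff.1 hU x hx.1
  refine ⟨ε, hε, fun z hz hzc => ⟨hball (Metric.mem_ball.2 hz), ?_⟩⟩
  have hsub : closure (U ∩ Z) ⊆ Z := hZ.closure_subset_iff.2 inter_subset_right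
  exact hsub hzc

lemma nonempty_diff_of_not_countable {s t : Set X} (hs : ¬ s.Countable) (ht : t.Countable) :
    (s \ t).Nonempty := by
  rw [Set.nonempty_iff_ne_empty]
  intro h
  exact hs (ht.mono (Set.diff_eq_empty.1 h))

/-- Positive lower bound for the distances from `p` to the terms of a sequence
converging to `x₀ ≠ p`, provided `p` avoids all terms. -/
lemma dist_lb_seq [MetricSpace X] {z : ℕ → X} {x₀ p : X}
    (hz : ∀ δ > 0, ∃ N, ∀ n ≥ N, dist (z n) x₀ < δ)
    (hp : ∀ n, p ≠ z n) (hpx : p ≠ x₀) :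
    ∃ ρ > 0, ∀ n, ρ ≤ dist p (z n) := by
  have hd : 0 < dist p x₀ := dist_pos.2 hpx
  obtain ⟨N, hN⟩ := hz (dist p x₀ / 2) (by linarith)
  obtain ⟨δ₂, hδ₂, hδ₂le⟩ := exists_pos_lb (Set.finite_Iio N)
    (fun n => dist p (z n)) (fun i _ => dist_pos.2 (hp i))
  refine ⟨min (dist p x₀ / 2) δ₂, by positivity, fun n => ?_⟩
  rcases lt_or_ge n N with h | h
  · exact le_trans (min_le_right _ _) (hδ₂le n h)
  · have h1 := hN n h
    have h2 : dist p x₀ ≤ dist p (z n) + dist (z n) x₀ := dist_triangle _ _ _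
    have h3 : dist p x₀ / 2 ≤ dist p (z n) := by linarith
    exact le_trans (min_le_left _ _) h3

lemma isOpen_of_subsingleton' {α : Type*} [TopologicalSpace α] [Subsingleton α]
    (t : Set α) : IsOpen t := by
  rcases t.eq_empty_or_nonempty with rfl | ⟨a, ha⟩
  · exact isOpen_empty
  · have : t = Set.univ := Set.eq_univ_of_forall fun b => (Subsingleton.elim a b) ▸ ha
    rw [this]; exact isOpen_univ

/-- The restriction of any map to a subsingleton set is a homeomorphism onto its image. -/
lemma isHomeomorph_restrict_of_subsingleton [TopologicalSpace X] [TopologicalSpace Y]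
    (f : X → Y) {s : Set X} (hs : s.Subsingleton) :
    IsHomeomorph (fun x : s => (⟨f x.1, Set.mem_image_of_mem f x.2⟩ : f '' s)) := by
  haveI : Subsingleton s := hs.coe_sort
  haveI : Subsingleton (f '' s) := (hs.image f).coe_sort
  refine ⟨continuous_def.2 fun t _ => isOpen_of_subsingleton' _, fun t _ => ?_, ?_, ?_⟩
  · exact isOpen_of_subsingleton' _
  · exact fun a b _ => Subsingleton.elim a b
  · rintro ⟨y, hy⟩
    obtain ⟨x, hx, rfl⟩ := hy
    exact ⟨⟨x, hx⟩, rfl⟩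

end Helpers

section Core

variable {X Y : Type*} [MetricSpace X] [MetricSpace Y]

/-- **Core continuity lemma.** If `f : X → Y` is a bijection such that images of open sets
and preimages of open sets are locally closed, and `A ⊆ X` is a set all of whose relative
balls are uncountable (and likewise for `f '' A` in `Y`), then `f` is continuous on `A`. -/
lemma continuousOn_of_openLC (f : X → Y) (hbij : Function.Bijective f)
    (hLC : ∀ U : Set X, IsOpen U → IsLocallyClosed (f '' U))
    (hLCinv : ∀ V : Set Y, IsOpen V → IsLocallyClosed (f ⁻¹' V))
    (A : Set X)
    (hA1 : ∀ x ∈ A, ∀ r > 0, ¬ (A ∩ Metric.ball x r).Countable)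
    (hA2 : ∀ y ∈ f '' A, ∀ r > 0, ¬ ((f '' A) ∩ Metric.ball y r).Countable) :
    ContinuousOn f A := by
  rw [Metric.continuousOn_iff]
  by_contra hcon
  push_neg at hcon
  obtain ⟨x₀, hx₀A, ε₀, hε₀, hbad⟩ := hcon
  -- choose a sequence of bad points converging to x₀
  have hseq : ∀ n : ℕ, ∃ a, a ∈ A ∧ dist a x₀ < 1 / ((n : ℝ) + 1) ∧
      ε₀ ≤ dist (f a) (f x₀) := by
    intro n
    obtain ⟨a, ha, h1, h2⟩ := hbad (1 / ((n : ℝ) + 1)) (by positivity)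
    exact ⟨a, ha, h1, h2⟩
  choose z hzA hzd hzf using hseq
  have hzne : ∀ n, z n ≠ x₀ := by
    intro n hevent
    have := hzf n
    rw [hevent] at this
    simp at this
    linarith
  -- the sequence converges to x₀ quantitatively
  have hz_small : ∀ δ > 0, ∃ N : ℕ, ∀ n ≥ N, dist (z n) x₀ < δ := by
    intro δ hδ
    obtain ⟨N, hN⟩ := exists_nat_one_div_lt hδ
    refine ⟨N, fun n hn => lt_trans (lt_of_lt_of_le (hzd n) ?_) hN⟩
    apply one_div_le_one_div_of_le (by positivity)
    have : (N : ℝ) ≤ (n : ℝ) := by exact_mod_cast hn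
    linarith
  -- dichotomy on accumulation of the values f (z n)
  by_cases Hacc : ∃ y₁ : Y, ∀ δ > 0, {n : ℕ | dist (f (z n)) y₁ < δ}.Infinite
  · -- Case D2: values accumulate at y₁ : contradict hLC
    obtain ⟨y₁, hy₁⟩ := Hacc
    obtain ⟨w₁, hw₁⟩ := hbij.2 y₁
    have hw₁x₀ : w₁ ≠ x₀ := by
      intro h
      obtain ⟨n, hn⟩ := (hy₁ ε₀ hε₀).nonempty
      rw [← hw₁, h] at hn
      exact absurd (hzf n) (not_le.2 hn)
    set r₀ : ℝ := dist w₁ x₀ / 2 with hr₀def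
    have hr₀ : 0 < r₀ := by
      have := dist_pos.2 hw₁x₀
      rw [hr₀def]; linarith
    -- exclusion set
    set Q : Set X := Set.range z ∪ {x₀} with hQdef
    have hQc : Q.Countable := (Set.countable_range z).union (Set.countable_singleton x₀)
    have hfQc : (f '' Q).Countable := hQc.image f
    -- plants
    have hplant : ∀ n i : ℕ, ∃ ξ, (ξ ∈ f '' A ∧ dist ξ (f (z n)) < 1 / ((i : ℝ) + 1)) ∧
        ξ ∉ f '' Q := by
      intro n i
      obtain ⟨ξ, hξ1, hξ2⟩ := nonempty_diff_of_not_countable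
        (hA2 (f (z n)) (Set.mem_image_of_mem f (hzA n)) (1 / ((i : ℝ) + 1)) (by positivity))
        hfQc
      exact ⟨ξ, ⟨hξ1.1, Metric.mem_ball.1 hξ1.2⟩, hξ2⟩
    choose ξ hξ hξQ using hplant
    -- preimages of plants
    have hpre : ∀ n i : ℕ, ∃ p, f p = ξ n i ∧ p ∉ Q := by
      intro n i
      obtain ⟨p, _, hfp⟩ := (hξ n i).1
      exact ⟨p, hfp, fun hpQ => hξQ n i ⟨p, hpQ, hfp⟩⟩
    choose p hfp hpQ using hpre
    have hpz : ∀ n i m, p n i ≠ z m := fun n i m h =>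
      hpQ n i (Or.inl ⟨m, h.symm⟩)
    have hpx : ∀ n i, p n i ≠ x₀ := fun n i h =>
      hpQ n i (Or.inr (by simp [h]))
    -- radii
    have hrad : ∀ n i : ℕ, ∃ ρ > 0, ∀ m, ρ ≤ dist (p n i) (z m) := by
      intro n i
      exact dist_lb_seq hz_small (hpz n i) (hpx n i)
    choose ρ hρpos hρle using hrad
    -- the open set
    set UX : Set X := Metric.ball w₁ r₀ ∪ ⋃ n, ⋃ i, Metric.ball (p n i) (ρ n i) with hUXdef
    have hUXopen : IsOpen UX :=
      Metric.isOpen_ball.union (isOpen_iUnion fun n => isOpen_iUnion fun i => Metric.isOpen_ball)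
    have hT := hLC UX hUXopen
    have hy₁T : y₁ ∈ f '' UX :=
      ⟨w₁, Or.inl (Metric.mem_ball.2 (by simpa using hr₀)), hw₁⟩
    obtain ⟨ε₂, hε₂, hloc⟩ := lc_ball hT hy₁T
    -- choose a suitable index n*
    obtain ⟨N₁, hN₁⟩ := hz_small r₀ hr₀
    obtain ⟨n', hn'mem, hn'gt⟩ := (hy₁ ε₂ hε₂).exists_gt N₁
    have hzw : r₀ ≤ dist (z n') w₁ := by
      have h1 : dist (z n') x₀ < r₀ := hN₁ n' (le_of_lt hn'gt)
      have h2 : dist w₁ x₀ ≤ dist w₁ (z n') + dist (z n') x₀ := dist_triangle _ _ _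
      have h3 : dist w₁ (z n') = dist (z n') w₁ := dist_comm _ _
      rw [hr₀def] at *
      linarith
    -- f (z n') is in the closure of f '' UX
    have hclT : f (z n') ∈ closure (f '' UX) := by
      rw [Metric.mem_closure_iff]
      intro ε hε
      obtain ⟨i, hi⟩ := exists_nat_one_div_lt hε
      refine ⟨ξ n' i, ⟨p n' i, ?_, hfp n' i⟩, ?_⟩
      · exact Or.inr (Set.mem_iUnion.2 ⟨n', Set.mem_iUnion.2 ⟨i,
          Metric.mem_ball.2 (by simpa using hρpos n' i)⟩⟩)
      · rw [dist_comm]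
        exact lt_trans (hξ n' i).2 hi
    have hmemT : f (z n') ∈ f '' UX := hloc _ hn'mem hclT
    obtain ⟨u, huUX, hfu⟩ := hmemT
    have huz : u = z n' := hbij.1 hfu
    rw [huz] at huUX
    rcases huUX with h | h
    · exact absurd (Metric.mem_ball.1 h) (not_lt.2 hzw)
    · obtain ⟨n'', hmem⟩ := Set.mem_iUnion.1 h
      obtain ⟨i'', hmem2⟩ := Set.mem_iUnion.1 hmem
      have hlt := Metric.mem_ball.1 hmem2
      have hge := hρle n'' i'' n'
      rw [dist_comm] at hlt
      linarith
  · -- Case D1: no accumulation point of the values: contradict hLCinv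
    push_neg at Hacc
    have hfin : ∀ y : Y, ∃ δ > 0, {n : ℕ | dist (f (z n)) y < δ}.Finite := by
      intro y
      obtain ⟨δ, hδ, hinf⟩ := Hacc y
      exact ⟨δ, hδ, hinf⟩
    -- plants around each z j
    have hplant : ∀ j i : ℕ, ∃ q, (q ∈ A ∧ dist q (z j) < 1 / ((i : ℝ) + 1)) ∧
        q ∉ Set.range z := by
      intro j i
      obtain ⟨q, hq1, hq2⟩ := nonempty_diff_of_not_countable
        (hA1 (z j) (hzA j) (1 / ((i : ℝ) + 1)) (by positivity))
        (Set.countable_range z)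
      exact ⟨q, ⟨hq1.1, Metric.mem_ball.1 hq1.2⟩, hq2⟩
    choose q hq hqz using hplant
    -- plant values avoid all values f (z n)
    have hvne : ∀ j i n : ℕ, f (q j i) ≠ f (z n) := by
      intro j i n h
      exact hqz j i ⟨n, (hbij.1 h).symm⟩
    -- radii for the plant values
    have hrad : ∀ j i : ℕ, ∃ δ > 0, ∀ n, δ ≤ dist (f (z n)) (f (q j i)) := by
      intro j i
      obtain ⟨δ₁, hδ₁, hNfin⟩ := hfin (f (q j i))
      obtain ⟨δ₂, hδ₂, hδ₂le⟩ := exists_pos_lb hNfin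
        (fun n => dist (f (z n)) (f (q j i)))
        (fun n _ => dist_pos.2 fun h => hvne j i n h.symm)
      refine ⟨min δ₁ δ₂, by positivity, fun n => ?_⟩
      by_cases hn : n ∈ {n : ℕ | dist (f (z n)) (f (q j i)) < δ₁}
      · exact le_trans (min_le_right _ _) (hδ₂le n hn)
      · exact le_trans (min_le_left _ _) (not_lt.1 hn)
    choose δv hδvpos hδvle using hrad
    -- the open set in Y
    set VY : Set Y := Metric.ball (f x₀) ε₀ ∪ ⋃ j, ⋃ i, Metric.ball (f (q j i)) (δv j i)
      with hVYdef
    have hVYopen : IsOpen VY :=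
      Metric.isOpen_ball.union (isOpen_iUnion fun j => isOpen_iUnion fun i => Metric.isOpen_ball)
    have hS := hLCinv VY hVYopen
    have hx₀S : x₀ ∈ f ⁻¹' VY := Or.inl (Metric.mem_ball.2 (by simpa using hε₀))
    obtain ⟨ε₁, hε₁, hloc⟩ := lc_ball hS hx₀S
    obtain ⟨N, hN⟩ := hz_small ε₁ hε₁
    -- z N is in the closure of the preimage
    have hclS : z N ∈ closure (f ⁻¹' VY) := by
      rw [Metric.mem_closure_iff]
      intro ε hε
      obtain ⟨i, hi⟩ := exists_nat_one_div_lt hε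
      refine ⟨q N i, ?_, ?_⟩
      · exact Or.inr (Set.mem_iUnion.2 ⟨N, Set.mem_iUnion.2 ⟨i,
          Metric.mem_ball.2 (by simpa using hδvpos N i)⟩⟩)
      · rw [dist_comm]
        exact lt_trans (hq N i).2 hi
    have hmemS : z N ∈ f ⁻¹' VY := hloc _ (hN N le_rfl) hclS
    rcases hmemS with h | h
    · exact absurd (Metric.mem_ball.1 h) (not_lt.2 (hzf N))
    · obtain ⟨j', hmem⟩ := Set.mem_iUnion.1 h
      obtain ⟨i', hmem2⟩ := Set.mem_iUnion.1 hmem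
      have hlt := Metric.mem_ball.1 hmem2
      have hge := hδvle j' i' N
      linarith

end Core

/-- **Corollary 3.** Let `f : X → Y` be a bijection between separable metric spaces
such that both `f` and `f⁻¹` are open-LC (images of open sets are locally closed; the
image under `f⁻¹` of an open set is its preimage under `f`). Then `f` is a countable
homeomorphism: `X` partitions into countably many pairwise disjoint sets `Xᵢ` such
that each restriction `f : Xᵢ → f(Xᵢ)` is a homeomorphism. -/
theorem countable_homeomorphism_of_openLC {X Y : Type*} [MetricSpace X] [SeparableSpace X]
    [MetricSpace Y] [SeparableSpace Y] (f : X → Y) (hbij : Function.Bijective f)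
    (hLC : ∀ U : Set X, IsOpen U → IsLocallyClosed (f '' U))
    (hLCinv : ∀ V : Set Y, IsOpen V → IsLocallyClosed (f ⁻¹' V)) :
    ∃ Xi : ℕ → Set X, (⋃ i, Xi i) = univ ∧ Pairwise (Function.onFun Disjoint Xi) ∧
      ∀ i, IsHomeomorph (fun x : Xi i =>
        (⟨f x.1, Set.mem_image_of_mem f x.2⟩ : f '' Xi i)) := by
  classical
  haveI : SecondCountableTopology X := UniformSpace.secondCountable_of_separable X
  haveI : SecondCountableTopology Y := UniformSpace.secondCountable_of_separable Y
  obtain ⟨bX, hbXc, _, hbX⟩ := exists_countable_basis X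
  obtain ⟨bY, hbYc, _, hbY⟩ := exists_countable_basis Y
  -- countable "light" parts on both sides
  set CX : Set X := ⋃₀ {U | U ∈ bX ∧ U.Countable} with hCXdef
  set CY : Set Y := ⋃₀ {V | V ∈ bY ∧ V.Countable} with hCYdef
  have hCXc : CX.Countable :=
    Set.Countable.sUnion (hbXc.mono fun U hU => hU.1) (fun U hU => hU.2)
  have hCYc : CY.Countable :=
    Set.Countable.sUnion (hbYc.mono fun V hV => hV.1) (fun V hV => hV.2)
  have hfCYc : (f ⁻¹' CY).Countable := hCYc.preimage hbij.1
  set Ctot : Set X := CX ∪ f ⁻¹' CY with hCtotdef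
  have hCtotc : Ctot.Countable := hCXc.union hfCYc
  set A : Set X := Ctotᶜ with hAdef
  -- description of f '' A
  have hfA : f '' A = (f '' CX ∪ CY)ᶜ := by
    rw [hAdef, Set.image_compl_eq hbij, hCtotdef, Set.image_union,
      Set.image_preimage_eq _ hbij.2]
  -- all relative balls of A are uncountable
  have hA1 : ∀ x ∈ A, ∀ r > 0, ¬ (A ∩ Metric.ball x r).Countable := by
    intro x hx r hr hcnt
    obtain ⟨U, hUb, hxU, hUsub⟩ := hbX.exists_subset_of_mem_open
      (Metric.mem_ball_self hr) Metric.isOpen_ball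
    have hUc : U.Countable := by
      have hsub : U ⊆ (A ∩ Metric.ball x r) ∪ Ctot := by
        intro u hu
        by_cases huA : u ∈ A
        · exact Or.inl ⟨huA, hUsub hu⟩
        · exact Or.inr (by simpa [hAdef] using huA)
      exact (hcnt.union hCtotc).mono hsub
    have hxCX : x ∈ CX := ⟨U, ⟨hUb, hUc⟩, hxU⟩
    exact hx (Or.inl hxCX)
  have hA2 : ∀ y ∈ f '' A, ∀ r > 0, ¬ ((f '' A) ∩ Metric.ball y r).Countable := by
    intro y hy r hr hcnt
    obtain ⟨V, hVb, hyV, hVsub⟩ := hbY.exists_subset_of_mem_open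
      (Metric.mem_ball_self hr) Metric.isOpen_ball
    have hVc : V.Countable := by
      have hsub : V ⊆ ((f '' A) ∩ Metric.ball y r) ∪ (f '' CX ∪ CY) := by
        intro v hv
        by_cases hvB : v ∈ f '' A
        · exact Or.inl ⟨hvB, hVsub hv⟩
        · refine Or.inr ?_
          rw [hfA] at hvB
          exact Set.notMem_compl_iff.1 hvB
      exact (hcnt.union ((hCXc.image f).union hCYc)).mono hsub
    have hyCY : y ∈ CY := ⟨V, ⟨hVb, hVc⟩, hyV⟩
    rw [hfA] at hy
    exact hy (Or.inr hyCY)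
  -- continuity of f on A
  have hfc : ContinuousOn f A := continuousOn_of_openLC f hbij hLC hLCinv A hA1 hA2
  -- continuity of the inverse on f '' A
  set E : X ≃ Y := Equiv.ofBijective f hbij with hEdef
  have hEf : ∀ x, E x = f x := fun x => rfl
  have hgimg : ∀ s : Set Y, ⇑E.symm '' s = f ⁻¹' s := by
    intro s
    ext x
    simp only [Set.mem_image, Set.mem_preimage]
    constructor
    · rintro ⟨v, hv, rfl⟩
      have h1 : f (E.symm v) = v := E.apply_symm_apply v
      rw [h1]; exact hv
    · intro hx
      refine ⟨f x, hx, ?_⟩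
      have h2 : E.symm (f x) = x := E.symm_apply_apply x
      exact h2
  have hgpre : ∀ s : Set X, ⇑E.symm ⁻¹' s = f '' s := by
    intro s
    ext y
    simp only [Set.mem_preimage, Set.mem_image]
    constructor
    · intro hy
      exact ⟨E.symm y, hy, E.apply_symm_apply y⟩
    · rintro ⟨x, hx, rfl⟩
      have h2 : E.symm (f x) = x := E.symm_apply_apply x
      rw [h2]; exact hx
  have hgfA : ⇑E.symm '' (f '' A) = A := by
    rw [hgimg, Set.preimage_image_eq _ hbij.1]
  have hgc : ContinuousOn (⇑E.symm) (f '' A) := by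
    apply continuousOn_of_openLC (⇑E.symm) E.symm.bijective
    · intro V hV
      rw [hgimg]
      exact hLCinv V hV
    · intro U hU
      rw [hgpre]
      exact hLC U hU
    · intro y hy r hr
      exact hA2 y hy r hr
    · intro x hx r hr
      rw [hgfA] at hx ⊢
      exact hA1 x hx r hr
  -- enumeration of the countable part
  obtain ⟨enc, henc⟩ := Set.countable_iff_exists_injective.1 hCtotc
  -- the pieces
  refine ⟨fun n => Nat.casesOn n A (fun m => {x | ∃ h : x ∈ Ctot, enc ⟨x, h⟩ = m}), ?_, ?_, ?_⟩
  · -- union is everything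
    apply Set.eq_univ_of_forall
    intro x
    by_cases hx : x ∈ Ctot
    · exact Set.mem_iUnion.2 ⟨enc ⟨x, hx⟩ + 1, ⟨hx, rfl⟩⟩
    · exact Set.mem_iUnion.2 ⟨0, hx⟩
  · -- pairwise disjoint
    intro i j hij
    rcases i with _ | i <;> rcases j with _ | j
    · exact absurd rfl hij
    · refine Set.disjoint_left.2 fun x hxA hxj => ?_
      obtain ⟨hx, _⟩ := hxj
      exact hxA hx
    · refine Set.disjoint_left.2 fun x hxi hxA => ?_
      obtain ⟨hx, _⟩ := hxi
      exact hxA hx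
    · refine Set.disjoint_left.2 fun x hxi hxj => ?_
      obtain ⟨hx, hxe⟩ := hxi
      obtain ⟨hx', hxe'⟩ := hxj
      have : enc ⟨x, hx⟩ = enc ⟨x, hx'⟩ := rfl
      exact hij (by simp only [Nat.add_right_cancel_iff]; rw [← hxe, ← hxe', this])
  · -- each piece is a homeomorphism onto its image
    intro i
    rcases i with _ | i
    · -- the big piece
      show IsHomeomorph (fun x : A => (⟨f x.1, Set.mem_image_of_mem f x.2⟩ : f '' A))
      set m : A → (f '' A : Set Y) :=
        fun x => ⟨f x.1, Set.mem_image_of_mem f x.2⟩ with hmdef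
      have hmc : Continuous m := by
        apply Continuous.subtype_mk
        exact hfc.restrict
      have hminvmem : ∀ y : (f '' A : Set Y), E.symm y.1 ∈ A := by
        rintro ⟨y, x, hxA, rfl⟩
        have : E.symm (f x) = x := E.symm_apply_apply x
        simpa [this] using hxA
      set minv : (f '' A : Set Y) → A := fun y => ⟨E.symm y.1, hminvmem y⟩ with hminvdef
      have hminvc : Continuous minv := by
        apply Continuous.subtype_mk
        exact hgc.restrict
      have hlinv : ∀ x : A, minv (m x) = x := by
        intro x
        apply Subtype.ext
        exact E.symm_apply_apply x.1
      have hrinv : ∀ y : (f '' A : Set Y), m (minv y) = y := by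
        intro y
        apply Subtype.ext
        exact E.apply_symm_apply y.1
      refine ⟨hmc, ?_, ?_, ?_⟩
      · -- open map
        intro U hU
        have himg : m '' U = minv ⁻¹' U := by
          ext w
          constructor
          · rintro ⟨u, hu, rfl⟩
            rw [Set.mem_preimage, hlinv u]
            exact hu
          · intro hw
            exact ⟨minv w, hw, hrinv w⟩
        rw [himg]
        exact hU.preimage hminvc
      · intro a b hab
        have := congrArg (fun t : (f '' A : Set Y) => minv t) hab
        simpa [hlinv a, hlinv b] using this
      · intro y
        exact ⟨minv y, hrinv y⟩
    · -- singleton pieces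
      apply isHomeomorph_restrict_of_subsingleton
      intro x hx y hy
      obtain ⟨hxC, hxe⟩ := hx
      obtain ⟨hyC, hye⟩ := hy
      have : enc ⟨x, hxC⟩ = enc ⟨y, hyC⟩ := by rw [hxe, hye]
      have := henc this
      exact congrArg Subtype.val this
end
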